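/- Define moments Mₙ and cumulants Kₙ by the formal relation ∑_{m≥0} (1/m!) φ_O((∑_{r≥1} K_r)^{⊗m}) = ∑_{n≥0} Mₙ, where K_r carries formal degree r. Then for each n, Mₙ = ∑_{partitions of n} φ_O( ∏_{r=1}^n (1/s_r!) K_r^{⊗ s_r} ), where the sum runs over all sequences (s₁,...,sₙ) of nonnegative integers with ∑_{r=1}^n r·s_r = n (generalized Meeron formula). -/

import Mathlib

open scoped BigOperators

/-- The moments `Mₙ` defined as the coefficient of `λ^n` in
`∑_{m≥0} (1/m!) φ_O((∑_{r≥1} λ^r K_r)^{⊗m})`: the coefficient of `λ^n` in the `m`-th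
power is the sum over all ordered sequences `(r₁,...,r_m)` of positive integers with
`r₁+...+r_m = n` of `φ_O(K_{r₁} ⊗ ... ⊗ K_{r_m})`. -/
noncomputable def meeronMoment {K V : Type*} [Field K] [AddCommGroup V] [Module K V]
    (φ : TensorAlgebra K V →ₗ[K] TensorAlgebra K V)
    (Kc : ℕ → TensorAlgebra K V) (n : ℕ) : TensorAlgebra K V :=
  ∑ m ∈ Finset.range (n + 1), (m.factorial : K)⁻¹ •
    ∑ c ∈ Finset.Nat.antidiagonalTuple m (n - m),
      φ (((List.finRange m).map fun i => Kc (c i + 1)).prod)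

/-- The right-hand side of the generalized Meeron formula: the sum over all partitions
of `n`, i.e. sequences `(s₁,...,sₙ)` with `∑ r·s_r = n`, of
`φ_O(∏_{r=1}^n (1/s_r!) K_r^{⊗ s_r})`. -/
noncomputable def meeronPartitionSum {K V : Type*} [Field K] [AddCommGroup V] [Module K V]
    (φ : TensorAlgebra K V →ₗ[K] TensorAlgebra K V)
    (Kc : ℕ → TensorAlgebra K V) (n : ℕ) : TensorAlgebra K V :=
  ∑ s ∈ (Fintype.piFinset fun _ : Fin n => Finset.range (n + 1)).filter
      (fun s => ∑ i, (i.1 + 1) * s i = n),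
    (∏ i, ((s i).factorial : K)⁻¹) •
      φ (((List.finRange n).map fun i => Kc (i.1 + 1) ^ s i).prod)

section Aux

open Finset

private lemma count_flatMap_replicate (c : ℕ → ℕ) (a : ℕ) :
    ∀ L : List ℕ, L.Nodup →
      (L.flatMap fun b => List.replicate (c b) b).count a = if a ∈ L then c a else 0
  | [], _ => by simp
  | b :: L, h => by
    have hnd := List.nodup_cons.1 h
    rw [List.flatMap_cons, List.count_append, List.count_replicate,
      count_flatMap_replicate c a L hnd.2]
    by_cases hab : a = b
    · subst hab
      simp [hnd.1]
    · simp [List.mem_cons, hab, Ne.symm hab]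

private lemma prod_monomial {R : Type*} [CommSemiring R] {ι : Type*} (s : Finset ι)
    (e : ι → ℕ) (a : ι → R) :
    ∏ j ∈ s, Polynomial.monomial (e j) (a j)
      = Polynomial.monomial (∑ j ∈ s, e j) (∏ j ∈ s, a j) := by
  classical
  induction s using Finset.cons_induction with
  | empty => simp [Polynomial.monomial_zero_one]
  | cons i s his ih =>
      rw [Finset.prod_cons, Finset.sum_cons, Finset.prod_cons, ih,
        Polynomial.monomial_mul_monomial]

variable {K V : Type*} [Field K] [AddCommGroup V] [Module K V]

private noncomputable def meeronL (φ : TensorAlgebra K V →ₗ[K] TensorAlgebra K V)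
    (Kc : ℕ → TensorAlgebra K V) (n : ℕ) : MvPolynomial ℕ K →ₗ[K] TensorAlgebra K V :=
  (MvPolynomial.basisMonomials ℕ K).constr K
    (fun d => φ (((List.finRange n).map fun i => Kc (i.1 + 1) ^ d i.1).prod))

private lemma meeronL_monomial (φ : TensorAlgebra K V →ₗ[K] TensorAlgebra K V)
    (Kc : ℕ → TensorAlgebra K V) (n : ℕ) (d : ℕ →₀ ℕ) :
    meeronL φ Kc n (MvPolynomial.monomial d 1)
      = φ (((List.finRange n).map fun i => Kc (i.1 + 1) ^ d i.1).prod) := by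
  have : (MvPolynomial.monomial d (1 : K)) = MvPolynomial.basisMonomials ℕ K d := by
    rw [MvPolynomial.coe_basisMonomials]
  rw [this, meeronL, Module.Basis.constr_basis]

private lemma meeronL_prod_pow (φ : TensorAlgebra K V →ₗ[K] TensorAlgebra K V)
    (Kc : ℕ → TensorAlgebra K V) (n : ℕ) (k : ℕ → ℕ) (hk : ∀ i, k i ≠ 0 → i < n) :
    meeronL φ Kc n (∏ i ∈ Finset.range n, MvPolynomial.X i ^ k i)
      = φ (((List.finRange n).map fun i => Kc (i.1 + 1) ^ k i.1).prod) := by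
  classical
  set d : ℕ →₀ ℕ := Finsupp.onFinset (Finset.range n) k
    (fun a ha => Finset.mem_range.2 (hk a ha)) with hd
  have hda : ∀ i, d i = k i := fun i => rfl
  have h1 : ∏ i ∈ Finset.range n, (MvPolynomial.X i : MvPolynomial ℕ K) ^ k i
      = MvPolynomial.monomial d 1 := by
    rw [← MvPolynomial.prod_X_pow_eq_monomial (s := d)]
    rw [show (∏ x ∈ d.support, MvPolynomial.X x ^ d x : MvPolynomial ℕ K)
        = ∏ x ∈ Finset.range n, MvPolynomial.X x ^ d x from
      Finset.prod_subset Finsupp.support_onFinset_subset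
        (fun x _ hx => by rw [Finsupp.notMem_support_iff.1 hx, pow_zero])]
    exact Finset.prod_congr rfl fun i _ => by rw [hda]
  rw [h1, meeronL_monomial]
  simp only [hda]

private lemma meeronL_tuple (φ : TensorAlgebra K V →ₗ[K] TensorAlgebra K V)
    (hperm : ∀ l l' : List (TensorAlgebra K V), l.Perm l' → φ l.prod = φ l'.prod)
    (Kc : ℕ → TensorAlgebra K V) {m n : ℕ} (x : Fin m → ℕ) (hx : ∀ j, x j < n) :
    meeronL φ Kc n (∏ j, MvPolynomial.X (x j))
      = φ (((List.finRange m).map fun i => Kc (x i + 1)).prod) := by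
  classical
  set l : List ℕ := (List.finRange m).map x with hl
  have hlb : ∀ b ∈ l, b < n := by
    intro b hb
    rw [hl, List.mem_map] at hb
    obtain ⟨j, -, rfl⟩ := hb
    exact hx j
  -- LHS
  have h1 : (∏ j, MvPolynomial.X (x j) : MvPolynomial ℕ K)
      = ∏ i ∈ Finset.range n, MvPolynomial.X i ^ l.count i := by
    rw [Fin.prod_univ_def,
      show List.map (fun j => (MvPolynomial.X (x j) : MvPolynomial ℕ K)) (List.finRange m)
        = List.map MvPolynomial.X l from by rw [hl, List.map_map]; rfl,
      Finset.prod_list_map_count]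
    refine Finset.prod_subset ?_ ?_
    · intro b hb
      exact Finset.mem_range.2 (hlb b (List.mem_toFinset.1 hb))
    · intro b _ hb
      rw [List.count_eq_zero.2 (fun h => hb (List.mem_toFinset.2 h)), pow_zero]
  rw [h1, meeronL_prod_pow φ Kc n _
    (fun i hi => hlb i (List.count_pos_iff.1 (Nat.pos_of_ne_zero hi)))]
  -- RHS : permutation argument
  set l₂ : List ℕ := (List.range n).flatMap fun b => List.replicate (l.count b) b with hl₂
  have hp : l.Perm l₂ := by
    rw [List.perm_iff_count]
    intro a
    rw [hl₂, count_flatMap_replicate _ _ _ List.nodup_range]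
    by_cases ha : a ∈ List.range n
    · rw [if_pos ha]
    · rw [if_neg ha, List.count_eq_zero]
      intro hal
      exact ha (List.mem_range.2 (hlb a hal))
  have hmap : ((List.finRange m).map fun i => Kc (x i + 1)) = l.map fun b => Kc (b + 1) := by
    rw [hl, List.map_map]; rfl
  rw [hmap, hperm _ _ (hp.map fun b => Kc (b + 1))]
  rw [hl₂, List.map_flatMap]
  simp only [List.map_replicate]
  have e1 : ∀ (L : List ℕ),
      (L.flatMap fun b => List.replicate (l.count b) (Kc (b + 1))).prod
        = (L.map fun b => Kc (b + 1) ^ l.count b).prod := by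
    intro L
    induction L with
    | nil => simp
    | cons b L ih =>
        rw [List.flatMap_cons, List.prod_append, ih, List.map_cons, List.prod_cons,
          List.prod_replicate]
  rw [e1, ← show (List.finRange n).map Fin.val = List.range n from
    List.ext_getElem (by simp) (by simp), List.map_map]
  rfl

end Aux

section Count
open Finset Polynomial

private lemma meeron_count (K : Type*) [Field K] (m n : ℕ) :
    ∑ x ∈ (Fintype.piFinset fun _ : Fin m => Finset.range n).filter
        (fun x => (∑ j, x j) + m = n),
      ∏ j, MvPolynomial.X (R := K) (x j)
    = ∑ k ∈ (Finset.piAntidiag (Finset.range n) m).filter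
        (fun k => ∑ i ∈ Finset.range n, (i + 1) * k i = n),
      Nat.multinomial (Finset.range n) k • ∏ i ∈ Finset.range n, MvPolynomial.X (R := K) i ^ k i := by
  classical
  set A : Polynomial (MvPolynomial ℕ K) :=
    ∑ i ∈ Finset.range n, Polynomial.monomial (i + 1) (MvPolynomial.X i) with hA
  have way1 : A ^ m = ∑ x ∈ Fintype.piFinset fun _ : Fin m => Finset.range n,
      Polynomial.monomial ((∑ j, x j) + m) (∏ j, MvPolynomial.X (x j)) := by
    have : A ^ m = ∏ _j : Fin m, A := by
      rw [Finset.prod_const, Finset.card_univ, Fintype.card_fin]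
    rw [this, hA, Finset.prod_univ_sum]
    refine Finset.sum_congr rfl fun x _ => ?_
    rw [prod_monomial]
    congr 1
    rw [Finset.sum_add_distrib, Finset.sum_const, Finset.card_univ, Fintype.card_fin,
      smul_eq_mul, mul_one]
  have way2 : A ^ m = ∑ k ∈ Finset.piAntidiag (Finset.range n) m,
      Nat.multinomial (Finset.range n) k •
        Polynomial.monomial (∑ i ∈ Finset.range n, (i + 1) * k i)
          (∏ i ∈ Finset.range n, MvPolynomial.X (R := K) i ^ k i) := by
    rw [hA, Finset.sum_pow_eq_sum_piAntidiag]
    refine Finset.sum_congr rfl fun k _ => ?_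
    rw [← nsmul_eq_mul]
    congr 1
    rw [show (∏ i ∈ Finset.range n, Polynomial.monomial (i + 1) (MvPolynomial.X (R := K) i) ^ k i)
        = ∏ i ∈ Finset.range n, Polynomial.monomial ((i + 1) * k i) (MvPolynomial.X (R := K) i ^ k i)
      from Finset.prod_congr rfl fun i _ => Polynomial.monomial_pow _ _ _, prod_monomial]
  have := congrArg (fun p : Polynomial (MvPolynomial ℕ K) => p.coeff n) (way1.symm.trans way2)
  simp only [Polynomial.finset_sum_coeff, Polynomial.coeff_smul, Polynomial.coeff_monomial] at this
  simp only [smul_ite, smul_zero] at this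
  rw [Finset.sum_filter, Finset.sum_filter]
  exact this

end Count

/-- generalized Meeron formula: with `φ_O` a linear, permutation-invariant,
idempotent map on the tensor algebra, the moments defined by the generalized exponential
relation satisfy, for each `n`,
`Mₙ = ∑_{partitions of n} φ_O(∏_{r=1}^n (1/s_r!) K_r^{⊗ s_r})`. -/
theorem generalized_meeron_formula
    {K V : Type*} [Field K] [CharZero K] [AddCommGroup V] [Module K V]
    (φ : TensorAlgebra K V →ₗ[K] TensorAlgebra K V)
    (hidem : φ ∘ₗ φ = φ)
    (hperm : ∀ l l' : List (TensorAlgebra K V), l.Perm l' → φ l.prod = φ l'.prod)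
    (Kc : ℕ → TensorAlgebra K V) (n : ℕ) :
    meeronMoment φ Kc n = meeronPartitionSum φ Kc n := by
  classical
  have step1 : ∀ m ∈ Finset.range (n + 1),
      (m.factorial : K)⁻¹ • (∑ c ∈ Finset.Nat.antidiagonalTuple m (n - m),
          φ (((List.finRange m).map fun i => Kc (c i + 1)).prod))
        = ∑ k ∈ (Finset.piAntidiag (Finset.range n) m).filter
            (fun k => ∑ i ∈ Finset.range n, (i + 1) * k i = n),
          (∏ i ∈ Finset.range n, ((k i).factorial : K)⁻¹) •
            φ (((List.finRange n).map fun i => Kc (i.1 + 1) ^ k i.1).prod) := by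
    intro m hm
    have hmn : m ≤ n := Nat.lt_succ_iff.1 (Finset.mem_range.1 hm)
    have ha : Finset.Nat.antidiagonalTuple m (n - m)
        = (Fintype.piFinset fun _ : Fin m => Finset.range n).filter
            (fun x => (∑ j, x j) + m = n) := by
      ext x
      rw [Finset.Nat.mem_antidiagonalTuple, Finset.mem_filter, Fintype.mem_piFinset]
      constructor
      · intro h
        have hb : ∀ j, x j < n := by
          intro j
          rcases Nat.eq_zero_or_pos m with hm0 | hm0
          · subst hm0; exact j.elim0
          · have := Finset.single_le_sum (f := x) (fun i _ => Nat.zero_le _) (Finset.mem_univ j)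
            omega
        exact ⟨fun j => Finset.mem_range.2 (hb j), by omega⟩
      · rintro ⟨-, h2⟩; omega
    rw [ha]
    have hb : ∑ x ∈ (Fintype.piFinset fun _ : Fin m => Finset.range n).filter
          (fun x => (∑ j, x j) + m = n),
        φ (((List.finRange m).map fun i => Kc (x i + 1)).prod)
        = ∑ x ∈ (Fintype.piFinset fun _ : Fin m => Finset.range n).filter
          (fun x => (∑ j, x j) + m = n),
        meeronL φ Kc n (∏ j, MvPolynomial.X (x j)) := by
      refine Finset.sum_congr rfl fun x hx => ?_
      have hxb : ∀ j, x j < n := by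
        have h' := (Finset.mem_filter.1 hx).1
        rw [Fintype.mem_piFinset] at h'
        exact fun j => Finset.mem_range.1 (h' j)
      exact (meeronL_tuple φ hperm Kc x hxb).symm
    rw [hb, ← map_sum, meeron_count, map_sum, Finset.smul_sum]
    refine Finset.sum_congr rfl fun k hk => ?_
    obtain ⟨hk1, hk2⟩ := Finset.mem_filter.1 hk
    rw [Finset.mem_piAntidiag] at hk1
    rw [map_nsmul, meeronL_prod_pow φ Kc n _
      (fun i hi => Finset.mem_range.1 (hk1.2 i hi))]
    rw [← Nat.cast_smul_eq_nsmul K, smul_smul]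
    congr 1
    have hspec : ((∏ i ∈ Finset.range n, (k i).factorial : ℕ) : K)
        * (Nat.multinomial (Finset.range n) k : K) = (m.factorial : K) := by
      rw [← Nat.cast_mul, Nat.multinomial_spec, hk1.1]
    have h1 : ((m.factorial : ℕ) : K) ≠ 0 := Nat.cast_ne_zero.2 (Nat.factorial_ne_zero m)
    have h2 : (∏ i ∈ Finset.range n, ((k i).factorial : K)) ≠ 0 :=
      Finset.prod_ne_zero_iff.2 fun i _ => Nat.cast_ne_zero.2 (Nat.factorial_ne_zero _)
    rw [Nat.cast_prod] at hspec
    rw [Finset.prod_inv_distrib]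
    field_simp
    linear_combination hspec
  rw [meeronMoment, Finset.sum_congr rfl step1, meeronPartitionSum]
  have hmaps : ∀ s ∈ (Fintype.piFinset fun _ : Fin n => Finset.range (n + 1)).filter
      (fun s => ∑ i, (i.1 + 1) * s i = n), (∑ i, s i) ∈ Finset.range (n + 1) := by
    intro s hs
    have h2 := (Finset.mem_filter.1 hs).2
    have hle : ∑ i, s i ≤ ∑ i, (i.1 + 1) * s i :=
      Finset.sum_le_sum fun i _ => Nat.le_mul_of_pos_left (s i) (Nat.succ_pos i.1)
    rw [Finset.mem_range]
    omega
  rw [← Finset.sum_fiberwise_of_maps_to hmaps]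
  refine Finset.sum_congr rfl fun m hm => ?_
  refine Finset.sum_nbij' (i := fun k => (fun i : Fin n => k i.1))
    (j := fun s => (fun b => if h : b < n then s ⟨b, h⟩ else 0)) ?_ ?_ ?_ ?_ ?_
  · intro k hk
    obtain ⟨hk1, hk2⟩ := Finset.mem_filter.1 hk
    rw [Finset.mem_piAntidiag] at hk1
    rw [Finset.mem_filter, Finset.mem_filter, Fintype.mem_piFinset]
    refine ⟨⟨fun i => ?_, ?_⟩, ?_⟩
    · have hsingle : (i.1 + 1) * k i.1 ≤ ∑ j ∈ Finset.range n, (j + 1) * k j :=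
        Finset.single_le_sum (f := fun j => (j + 1) * k j)
          (fun j _ => Nat.zero_le _) (Finset.mem_range.2 i.isLt)
      have hkk : k i.1 ≤ (i.1 + 1) * k i.1 := Nat.le_mul_of_pos_left _ (Nat.succ_pos i.1)
      rw [Finset.mem_range]
      show k i.1 < n + 1
      omega
    · rw [← Finset.sum_range (fun i => (i + 1) * k i)]
      exact hk2
    · rw [← Finset.sum_range (fun i => k i)]
      exact hk1.1
  · intro s hs
    obtain ⟨hs1, hs2⟩ := Finset.mem_filter.1 hs
    obtain ⟨hs3, hs4⟩ := Finset.mem_filter.1 hs1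
    have heva : ∀ i : Fin n, (if h : (i : ℕ) < n then s ⟨i.1, h⟩ else 0) = s i := by
      intro i
      rw [dif_pos i.isLt]
    rw [Finset.mem_filter, Finset.mem_piAntidiag]
    refine ⟨⟨?_, ?_⟩, ?_⟩
    · show ∑ b ∈ Finset.range n, (if h : b < n then s ⟨b, h⟩ else 0) = m
      rw [Finset.sum_range, Finset.sum_congr rfl fun i _ => heva i]
      exact hs2
    · intro b hb
      rw [Finset.mem_range]
      by_contra hbn
      exact hb (dif_neg hbn)
    · show ∑ b ∈ Finset.range n, (b + 1) * (if h : b < n then s ⟨b, h⟩ else 0) = n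
      rw [Finset.sum_range, Finset.sum_congr rfl fun (i : Fin n) (_ : i ∈ Finset.univ) =>
        by rw [heva i]]
      exact hs4
  · intro k hk
    obtain ⟨hk1, -⟩ := Finset.mem_filter.1 hk
    rw [Finset.mem_piAntidiag] at hk1
    funext b
    by_cases hbn : b < n
    · simp [dif_pos hbn]
    · simp only [dif_neg hbn]
      by_contra h0
      exact hbn (Finset.mem_range.1 (hk1.2 b fun h => h0 h.symm))
  · intro s hs
    funext i
    simp [i.isLt]
  · intro k hk
    congr 1
    rw [Finset.prod_range (fun i => ((k i).factorial : K)⁻¹)]
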